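/- Let E(x) = Tr₂(Σ_{r∈R} K_r* x K_r) be D_e-preserving and identity-preserving, with P_{r;m,i} := Σ_{s∈R}(K_{s;mr}K_{s;mr}*)(i,i) and P_{r;m} := Σ_i P_{r;m,i}. Fix n ∈ ℕ and indices i₀,…,iₙ, and define matrices recursively by Aₙ := E(E_{iₙiₙ}⊗1) and A_m := E(E_{i_m i_m}⊗A_{m+1}) for m = n−1,…,0. Then A₀ = Σ_{r₀,…,rₙ} P_{r₀;i₀,r₁}·P_{r₁;i₁,r₂}···P_{r_{n−1};i_{n−1},rₙ}·P_{rₙ;iₙ} · E_{r₀r₀}. Consequently, for every probability vector p⁰ on {1,…,d} (entries ≥ 0 summing to 1), Tr(diag(p⁰)·A₀) = Σ_{r₀,…,rₙ} p⁰_{r₀}·P_{r₀;i₀,r₁}···P_{r_{n−1};i_{n−1},rₙ}·P_{rₙ;iₙ}; these are the joint probabilities of the restriction of the quantum Markov chain determined by (diag(p⁰), E) to the diagonal subalgebra. -/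

import Mathlib

open Matrix BigOperators

/-- Kronecker tensor product of two `d × d` matrices, indexed by `Fin d × Fin d`. -/
noncomputable def mtens {d : ℕ} (A B : Matrix (Fin d) (Fin d) ℂ) :
    Matrix (Fin d × Fin d) (Fin d × Fin d) ℂ :=
  fun p q => A p.1 q.1 * B p.2 q.2

/-- Partial trace over the second tensor factor. -/
noncomputable def ptr2 {d : ℕ} (X : Matrix (Fin d × Fin d) (Fin d × Fin d) ℂ) :
    Matrix (Fin d) (Fin d) ℂ :=
  fun i j => ∑ k, X (i, k) (j, k)

/-- The `(h,h')` block of `K ∈ M_d ⊗ M_d`. -/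
noncomputable def blk {d : ℕ} (K : Matrix (Fin d × Fin d) (Fin d × Fin d) ℂ) (h h' : Fin d) :
    Matrix (Fin d) (Fin d) ℂ :=
  fun a b => K (h, a) (h', b)

/-- The transition expectation `E(x) = Tr₂(Σ_r K_r* x K_r)`. -/
noncomputable def Emap {d : ℕ} {R : Type*} [Fintype R]
    (K : R → Matrix (Fin d × Fin d) (Fin d × Fin d) ℂ)
    (x : Matrix (Fin d × Fin d) (Fin d × Fin d) ℂ) : Matrix (Fin d) (Fin d) ℂ :=
  ptr2 (∑ r, (K r)ᴴ * x * K r)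

/-- `E` is `D_e`-preserving: it maps (tensor products of) diagonal matrices to
diagonal matrices. -/
def DePreserving {d : ℕ} {R : Type*} [Fintype R]
    (K : R → Matrix (Fin d × Fin d) (Fin d × Fin d) ℂ) : Prop :=
  ∀ a b : Matrix (Fin d) (Fin d) ℂ, a.IsDiag → b.IsDiag → (Emap K (mtens a b)).IsDiag

/-- `P_{r;m,i} := Σ_{s∈R} (K_{s;mr} K_{s;mr}*)(i,i)`. -/
noncomputable def Pval {d : ℕ} {R : Type*} [Fintype R]
    (K : R → Matrix (Fin d × Fin d) (Fin d × Fin d) ℂ) (r m i : Fin d) : ℂ :=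
  ∑ s, (blk (K s) m r * (blk (K s) m r)ᴴ) i i

/-- `P_{r;m} := Σ_i P_{r;m,i}`. -/
noncomputable def Psum {d : ℕ} {R : Type*} [Fintype R]
    (K : R → Matrix (Fin d × Fin d) (Fin d × Fin d) ℂ) (r m : Fin d) : ℂ :=
  ∑ i, Pval K r m i

lemma emapA {d : ℕ} {R : Type*} [Fintype R] (K : R → Matrix (Fin d × Fin d) (Fin d × Fin d) ℂ)
    (hpres : DePreserving K) (i0 : Fin d) (β : Fin d → ℂ) :
    Emap K (mtens (Matrix.single i0 i0 1) (Matrix.diagonal β)) =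
      Matrix.diagonal (fun a => ∑ b, Pval K a i0 b * β b) := by
  have hdiag : (Emap K (mtens (Matrix.single i0 i0 1) (Matrix.diagonal β))).IsDiag := by
    apply hpres
    · intro a b hab
      simp [Matrix.single]
      rintro rfl rfl; exact absurd rfl hab
    · exact Matrix.isDiag_diagonal β
  ext a b
  by_cases hab : a = b
  · subst hab
    simp only [Matrix.diagonal_apply_eq, Emap, ptr2, Matrix.sum_apply, Matrix.mul_apply,
      mtens, Matrix.conjTranspose_apply, Matrix.single, Matrix.diagonal_apply,
      Fintype.sum_prod_type, Pval, blk, Matrix.of_apply]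
    simp only [ite_mul, mul_ite, one_mul, mul_one, zero_mul, mul_zero, ite_and]
    simp only [Finset.sum_ite_irrel, Finset.sum_ite_eq, Finset.sum_ite_eq', Finset.mem_univ,
      if_true, Finset.sum_const_zero]
    simp only [ite_mul, zero_mul, Finset.sum_ite_irrel, Finset.sum_const_zero,
      Finset.sum_ite_eq, Finset.mem_univ, if_true, Finset.sum_mul]
    conv_lhs => enter [2, x]; rw [Finset.sum_comm]
    rw [Finset.sum_comm]
    conv_lhs => enter [2, x3]; rw [Finset.sum_comm]
    exact Finset.sum_congr rfl fun x3 _ => Finset.sum_congr rfl fun x1 _ =>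
      Finset.sum_congr rfl fun x _ => by ring
  · rw [hdiag hab, Matrix.diagonal_apply_ne _ hab]

noncomputable def Tfun {d : ℕ} {R : Type*} [Fintype R]
    (K : R → Matrix (Fin d × Fin d) (Fin d × Fin d) ℂ) (i : ℕ → Fin d) :
    ℕ → ℕ → Fin d → ℂ
  | 0, m, a => Psum K a (i m)
  | (j+1), m, a => ∑ b, Pval K a (i m) b * Tfun K i j (m+1) b

lemma Tfun_eq_sum {d : ℕ} {R : Type*} [Fintype R]
    (K : R → Matrix (Fin d × Fin d) (Fin d × Fin d) ℂ) (i : ℕ → Fin d) :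
    ∀ (j m : ℕ) (a : Fin d), Tfun K i j m a =
      ∑ r : Fin j → Fin d,
        (∏ t : Fin j, Pval K ((Fin.cons a r : Fin (j+1) → Fin d) t.castSucc) (i (m + t)) (r t)) *
          Psum K ((Fin.cons a r : Fin (j+1) → Fin d) (Fin.last j)) (i (m + j)) := by
  intro j
  induction j with
  | zero =>
      intro m a
      rw [Fintype.sum_unique]
      simp [Tfun, Fin.last]
  | succ j ih =>
      intro m a
      rw [show Tfun K i (j+1) m a = ∑ b, Pval K a (i m) b * Tfun K i j (m+1) b from rfl]
      rw [← (Fin.consEquiv (fun _ : Fin (j+1) => Fin d)).sum_comp, Fintype.sum_prod_type]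
      refine Finset.sum_congr rfl fun b _ => ?_
      rw [ih (m+1) b, Finset.mul_sum]
      refine Finset.sum_congr rfl fun r' _ => ?_
      rw [Fin.prod_univ_succ]
      simp only [Fin.consEquiv_apply, Fin.castSucc_zero, Fin.cons_zero, Fin.cons_succ,
        ← Fin.succ_castSucc, ← Fin.succ_last, Fin.val_succ, Fin.val_zero, Nat.add_zero]
      have h1 : ∀ t : Fin j, m + (↑t + 1) = m + 1 + ↑t := fun t => by omega
      have h2 : m + (j + 1) = m + 1 + j := by omega
      rw [h2, Finset.prod_congr rfl (fun t (_ : t ∈ Finset.univ) => by rw [← h1 t])]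
      ring

lemma diag_eq_sum_std {d : ℕ} (f : Fin d → ℂ) :
    Matrix.diagonal f = ∑ a, f a • Matrix.single a a 1 := by
  ext x y
  by_cases h : x = y <;>
    simp [Matrix.diagonal_apply, Matrix.sum_apply, Matrix.single, h, ite_and,
      Finset.sum_ite_eq, eq_comm]

lemma trace_diag_mul_std {d : ℕ} (f : Fin d → ℂ) (a : Fin d) :
    Matrix.trace (Matrix.diagonal f * Matrix.single a a 1) = f a := by
  simp [Matrix.trace, Matrix.diag, Matrix.mul_apply, Matrix.diagonal_apply,
    Matrix.single, ite_and, Finset.sum_ite_eq, Finset.sum_ite_eq']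


/-- The iterated action of a `D_e`-preserving identity-preserving
transition expectation on diagonal matrix units, and the resulting joint probabilities of
the diagonal restriction of the associated quantum Markov chain. -/
theorem stmt7 {d : ℕ} (hd : 1 ≤ d) {R : Type*} [Fintype R]
    (K : R → Matrix (Fin d × Fin d) (Fin d × Fin d) ℂ)
    (hpres : DePreserving K)
    (hunit : Emap K (mtens 1 1) = 1)
    (n : ℕ) (i : ℕ → Fin d)
    (A : ℕ → Matrix (Fin d) (Fin d) ℂ)
    (hAn : A n = Emap K (mtens (Matrix.single (i n) (i n) 1) 1))
    (hArec : ∀ m, m < n →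
      A m = Emap K (mtens (Matrix.single (i m) (i m) 1) (A (m + 1))))
    (p : Fin d → ℝ) (hp_nonneg : ∀ k, 0 ≤ p k) (hp_sum : ∑ k, p k = 1) :
    A 0 = (∑ r : Fin (n + 1) → Fin d,
        ((∏ m : Fin n, Pval K (r m.castSucc) (i m) (r m.succ)) *
          Psum K (r (Fin.last n)) (i n)) •
        Matrix.single (r 0) (r 0) 1) ∧
    Matrix.trace ((Matrix.diagonal fun k => (p k : ℂ)) * A 0) =
      ∑ r : Fin (n + 1) → Fin d,
        (p (r 0) : ℂ) * (∏ m : Fin n, Pval K (r m.castSucc) (i m) (r m.succ)) *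
          Psum K (r (Fin.last n)) (i n) := by
  -- A m is diagonal with entries given by Tfun
  have key : ∀ j m, m + j = n → A m = Matrix.diagonal (Tfun K i j m) := by
    intro j
    induction j with
    | zero =>
        intro m hm
        have : m = n := by omega
        subst this
        rw [hAn, show (1 : Matrix (Fin d) (Fin d) ℂ) = Matrix.diagonal (fun _ => 1) from
          Matrix.diagonal_one.symm, emapA K hpres]
        congr 1
        funext a
        simp [Tfun, Psum]
    | succ j ih =>
        intro m hm
        rw [hArec m (by omega), ih (m+1) (by omega), emapA K hpres]
        rfl
  have hA0 : A 0 = Matrix.diagonal (Tfun K i n 0) := key n 0 (by omega)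
  have main : A 0 = (∑ r : Fin (n + 1) → Fin d,
      ((∏ m : Fin n, Pval K (r m.castSucc) (i m) (r m.succ)) *
        Psum K (r (Fin.last n)) (i n)) •
      Matrix.single (r 0) (r 0) 1) := by
    rw [hA0, ← (Fin.consEquiv fun _ : Fin (n+1) => Fin d).sum_comp, Fintype.sum_prod_type]
    simp only [Fin.consEquiv_apply, Fin.cons_zero, Fin.cons_succ]
    rw [diag_eq_sum_std]
    refine Finset.sum_congr rfl fun a _ => ?_
    rw [← Finset.sum_smul]
    congr 1
    rw [Tfun_eq_sum]
    exact Finset.sum_congr rfl fun r' _ => by simp [Nat.zero_add]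
  refine ⟨main, ?_⟩
  rw [main, Matrix.mul_sum]
  simp only [Matrix.mul_smul, Matrix.trace_sum, Matrix.trace_smul]
  refine Finset.sum_congr rfl fun r _ => ?_
  rw [trace_diag_mul_std]
  simp [smul_eq_mul]
  ring
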